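/- Let X be a compact Hausdorff space, let γ = (γ_1, …, γ_N) be an iterated function system on X such that every γ_k is a topological embedding, and let 𝕏 ⊆ X be dense and completely invariant under γ, with γ_1(𝕏), …, γ_N(𝕏) pairwise disjoint and each restriction γ_k|_𝕏 injective. Fix n ∈ ℕ. For 𝐤 = (k_n, …, k_1) ∈ {1, …, N}^n and x ∈ X write 𝛄_𝐤(x) := (γ_𝐤(x), …, γ_{k_2}(γ_{k_1}(x)), γ_{k_1}(x), x) ∈ X_n. Then for every continuous function f : X_n → ℂ there exists a bounded linear operator T on the Hilbert space ℓ²(𝕏, ℂ) such that T(e_x) = Σ_{𝐤 ∈ {1,…,N}^n} f(𝛄_𝐤(x)) · e_{γ_𝐤(x)} for every x ∈ 𝕏, where e_y denotes the standard basis vector at y ∈ 𝕏, and moreover sup_{𝐳 ∈ X_n} |f(𝐳)| ≤ ‖T‖ ≤ N^{n/2} · sup_{𝐳 ∈ X_n} |f(𝐳)|. -/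

import Mathlib

/-- A subset `S` of `X` is completely invariant under the iterated function system `γ`
if `γ k '' S ⊆ S` and `γ k ⁻¹' S ⊆ S` for every index `k`. -/
def CompletelyInvariant {X : Type*} {N : ℕ} (γ : Fin N → X → X) (S : Set X) : Prop :=
  ∀ k : Fin N, γ k '' S ⊆ S ∧ γ k ⁻¹' S ⊆ S

/-- `c : Fin (n+1) → X` (written `(x_n, …, x_0)` with `x_i = c i`) is a `γ`-chain of length `n`
if for each `i < n` there is an index `k` with `x_{i+1} = γ k (x_i)`. -/
def IsGammaChain {X : Type*} {N : ℕ} (γ : Fin N → X → X) (n : ℕ)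
    (c : Fin (n + 1) → X) : Prop :=
  ∀ i : ℕ, ∀ h : i < n, ∃ k : Fin N, c ⟨i + 1, by omega⟩ = γ k (c ⟨i, by omega⟩)

/-- For a tuple `𝐤 = (k_n, …, k_1)` (encoded as `k : Fin n → Fin N` with `k i = k_{i+1}`)
and `x : X`, `chainAux γ k x i` is the `i`-th entry `γ_{k_i} (⋯ (γ_{k_1} x))` of the chain
`𝛄_𝐤(x) = (γ_𝐤(x), …, γ_{k_1}(x), x)`. -/
def chainAux {X : Type*} {N : ℕ} (γ : Fin N → X → X) {n : ℕ} (k : Fin n → Fin N) (x : X) :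
    ℕ → X
  | 0 => x
  | i + 1 => if h : i < n then γ (k ⟨i, h⟩) (chainAux γ k x i) else x

lemma chainAux_isGammaChain {X : Type*} {N : ℕ} (γ : Fin N → X → X) {n : ℕ}
    (k : Fin n → Fin N) (x : X) :
    IsGammaChain γ n (fun i : Fin (n + 1) => chainAux γ k x i.1) := by
  intro i hi
  exact ⟨k ⟨i, hi⟩, by simp [chainAux, hi]⟩

lemma chainAux_mem {X : Type*} {N : ℕ} {γ : Fin N → X → X} {𝕏 : Set X}
    (hinv : CompletelyInvariant γ 𝕏) {n : ℕ} (k : Fin n → Fin N) {x : X} (hx : x ∈ 𝕏) :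
    ∀ i : ℕ, chainAux γ k x i ∈ 𝕏 := by
  intro i
  induction i with
  | zero => exact hx
  | succ i ih =>
    simp only [chainAux]
    split
    · exact (hinv _).1 ⟨_, ih, rfl⟩
    · exact hx

lemma chainAux_castSucc {X : Type*} {N : ℕ} (γ : Fin N → X → X) {n : ℕ}
    (k : Fin (n + 1) → Fin N) (x : X) :
    ∀ i : ℕ, i ≤ n → chainAux γ (fun j : Fin n => k j.castSucc) x i = chainAux γ k x i := by
  intro i
  induction i with
  | zero => intro _; rfl
  | succ i ih =>
    intro hi
    have hi' : i < n := hi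
    have hi'' : i < n + 1 := by omega
    simp only [chainAux, dif_pos hi', dif_pos hi'', ih (le_of_lt hi')]
    rfl

lemma chainAux_injOn {X : Type*} {N : ℕ} {γ : Fin N → X → X} {𝕏 : Set X}
    (hinv : CompletelyInvariant γ 𝕏)
    (hdisj : ∀ j k : Fin N, j ≠ k → Disjoint (γ j '' 𝕏) (γ k '' 𝕏))
    (hinj : ∀ k : Fin N, Set.InjOn (γ k) 𝕏) :
    ∀ {n : ℕ} {k k' : Fin n → Fin N} {x x' : X}, x ∈ 𝕏 → x' ∈ 𝕏 →
      chainAux γ k x n = chainAux γ k' x' n → k = k' ∧ x = x' := by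
  intro n
  induction n with
  | zero =>
    intro k k' x x' _ _ h
    exact ⟨Subsingleton.elim _ _, h⟩
  | succ n ih =>
    intro k k' x x' hx hx' h
    have hn : n < n + 1 := Nat.lt_succ_self n
    simp only [chainAux, dif_pos hn] at h
    have ha : chainAux γ k x n ∈ 𝕏 := chainAux_mem hinv k hx n
    have ha' : chainAux γ k' x' n ∈ 𝕏 := chainAux_mem hinv k' hx' n
    have hkk : k ⟨n, hn⟩ = k' ⟨n, hn⟩ := by
      by_contra hne
      exact Set.disjoint_left.mp (hdisj _ _ hne) ⟨_, ha, rfl⟩ ⟨_, ha', h.symm⟩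
    rw [hkk] at h
    have heq : chainAux γ k x n = chainAux γ k' x' n := hinj _ ha ha' h
    rw [← chainAux_castSucc γ k x n le_rfl, ← chainAux_castSucc γ k' x' n le_rfl] at heq
    obtain ⟨hk, hx⟩ := ih hx hx' heq
    refine ⟨funext fun j => ?_, hx⟩
    refine Fin.lastCases ?_ ?_ j
    · exact hkk
    · intro j
      exact congrFun hk j

lemma chainAux_continuous {X : Type*} [TopologicalSpace X] {N : ℕ} {γ : Fin N → X → X}
    (hγ : ∀ k, Continuous (γ k)) {n : ℕ} (k : Fin n → Fin N) (i : ℕ) :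
    Continuous fun x : X => chainAux γ k x i := by
  induction i with
  | zero => exact continuous_id
  | succ i ih =>
    by_cases h : i < n
    · simp only [chainAux, dif_pos h]
      exact (hγ _).comp ih
    · simp only [chainAux, dif_neg h]
      exact continuous_id

lemma isGammaChain_eq_chainAux {X : Type*} {N : ℕ} {γ : Fin N → X → X} {n : ℕ}
    {c : Fin (n + 1) → X} (hc : IsGammaChain γ n c) :
    ∃ k : Fin n → Fin N, ∀ i : Fin (n + 1),
      c i = chainAux γ k (c ⟨0, Nat.succ_pos n⟩) i.1 := by
  refine ⟨fun j => (hc j.1 j.2).choose, ?_⟩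
  have key : ∀ i : ℕ, ∀ hi : i ≤ n,
      c ⟨i, by omega⟩ = chainAux γ (fun j => (hc j.1 j.2).choose) (c ⟨0, Nat.succ_pos n⟩) i := by
    intro i
    induction i with
    | zero => intro _; rfl
    | succ i ih =>
      intro hi
      have hi' : i < n := hi
      simp only [chainAux, dif_pos hi']
      rw [← ih (le_of_lt hi')]
      exact (hc i hi').choose_spec
  intro i
  have := key i.1 (by omega)
  simpa using this

lemma isClosed_isGammaChain {X : Type*} [TopologicalSpace X] [T2Space X] {N : ℕ}
    {γ : Fin N → X → X} (hγ : ∀ k, Continuous (γ k)) (n : ℕ) :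
    IsClosed {c : Fin (n + 1) → X | IsGammaChain γ n c} := by
  have hset : {c : Fin (n + 1) → X | IsGammaChain γ n c} =
      ⋂ i : Fin n, ⋃ k : Fin N,
        {c : Fin (n + 1) → X | c ⟨i.1 + 1, by omega⟩ = γ k (c ⟨i.1, by omega⟩)} := by
    ext c
    simp only [Set.mem_setOf_eq, Set.mem_iInter, Set.mem_iUnion]
    constructor
    · intro h i
      exact h i.1 i.2
    · intro h i hi
      exact h ⟨i, hi⟩
  rw [hset]
  refine isClosed_iInter fun i => ?_
  refine isClosed_iUnion_of_finite fun k => ?_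
  exact isClosed_eq (continuous_apply _) ((hγ k).comp (continuous_apply _))

open scoped ENNReal in
set_option maxHeartbeats 1600000 in
/-- Lemma 5.2.1 (the operator `ρ_n(f)`): for every continuous `f : X_n → ℂ` there is a
bounded operator `T` on `ℓ²(𝕏, ℂ)` with `T e_x = Σ_{𝐤} f(𝛄_𝐤(x)) e_{γ_𝐤(x)}` for `x ∈ 𝕏`,
and `sup |f| ≤ ‖T‖ ≤ N^{n/2} · sup |f|`. -/
theorem exists_rho_n {X : Type*} [TopologicalSpace X] [CompactSpace X] [T2Space X] {N : ℕ}
    (γ : Fin N → X → X) (hemb : ∀ k, Topology.IsEmbedding (γ k))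
    (𝕏 : Set X) (hdense : Dense 𝕏) (hinv : CompletelyInvariant γ 𝕏)
    (hdisj : ∀ j k : Fin N, j ≠ k → Disjoint (γ j '' 𝕏) (γ k '' 𝕏))
    (hinj : ∀ k : Fin N, Set.InjOn (γ k) 𝕏)
    (n : ℕ) (f : C({c : Fin (n + 1) → X // IsGammaChain γ n c}, ℂ)) :
    haveI : DecidableEq ↥𝕏 := Classical.decEq _
    ∃ T : lp (fun _ : 𝕏 => ℂ) 2 →L[ℂ] lp (fun _ : 𝕏 => ℂ) 2,
      (∀ x : 𝕏, T (lp.single 2 x 1) =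
        ∑ k : Fin n → Fin N,
          f ⟨fun i => chainAux γ k x.1 i.1, chainAux_isGammaChain γ k x.1⟩ •
            lp.single 2 (⟨chainAux γ k x.1 n, chainAux_mem hinv k x.2 n⟩ : 𝕏) 1) ∧
      (⨆ z : {c : Fin (n + 1) → X // IsGammaChain γ n c}, ‖f z‖) ≤ ‖T‖ ∧
      ‖T‖ ≤ (N : ℝ) ^ ((n : ℝ) / 2) *
        ⨆ z : {c : Fin (n + 1) → X // IsGammaChain γ n c}, ‖f z‖ := by
  classical
  set Z := {c : Fin (n + 1) → X // IsGammaChain γ n c}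
  let g : (Fin n → Fin N) → ↥𝕏 → ℂ := fun k x =>
    f ⟨fun i => chainAux γ k x.1 i.1, chainAux_isGammaChain γ k x.1⟩
  let σ : (Fin n → Fin N) → ↥𝕏 → ↥𝕏 := fun k x =>
    ⟨chainAux γ k x.1 n, chainAux_mem hinv k x.2 n⟩
  let Φ : (Fin n → Fin N) × ↥𝕏 → ↥𝕏 := fun p => σ p.1 p.2
  have hΦ : Function.Injective Φ := by
    rintro ⟨k, x⟩ ⟨k', x'⟩ h
    have h' : chainAux γ k x.1 n = chainAux γ k' x'.1 n := congrArg Subtype.val h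
    obtain ⟨hk, hx⟩ := chainAux_injOn hinv hdisj hinj x.2 x'.2 h'
    exact Prod.ext hk (Subtype.ext hx)
  -- the sup of |f|
  haveI : CompactSpace Z := isCompact_iff_compactSpace.mp
    ((isClosed_isGammaChain (fun k => (hemb k).continuous) n).isCompact)
  set C := ⨆ z : Z, ‖f z‖ with hCdef
  have hC0 : 0 ≤ C := Real.iSup_nonneg fun z => norm_nonneg _
  have hbdd : BddAbove (Set.range fun z : Z => ‖f z‖) :=
    (isCompact_range (continuous_norm.comp f.continuous)).bddAbove
  have hfC : ∀ z : Z, ‖f z‖ ≤ C := fun z => le_ciSup hbdd z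
  have hgC : ∀ k x, ‖g k x‖ ≤ C := fun k x => hfC _
  -- basic numerology
  have h2 : (0:ℝ) < (2 : ℝ≥0∞).toReal := by norm_num
  have htr : (2 : ℝ≥0∞).toReal = (2:ℝ) := by norm_num
  -- the coefficient function
  let w : (lp (fun _ : ↥𝕏 => ℂ) 2) → (Fin n → Fin N) × ↥𝕏 → ℂ := fun v p => g p.1 p.2 * v p.2
  have hv2 : ∀ v : lp (fun _ : ↥𝕏 => ℂ) 2, Summable fun x => ‖v x‖ ^ (2:ℝ) := by
    intro v
    have := (lp.memℓp v).summable h2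
    simpa [htr] using this
  have hmaj : ∀ v : lp (fun _ : ↥𝕏 => ℂ) 2,
      Summable fun p : (Fin n → Fin N) × ↥𝕏 => C ^ (2:ℝ) * ‖v p.2‖ ^ (2:ℝ) := by
    intro v
    refine (summable_prod_of_nonneg ?_).mpr ⟨fun k => ((hv2 v).mul_left _), ?_⟩
    · intro p
      positivity
    · exact Summable.of_finite
  have hwle : ∀ v p, ‖w v p‖ ^ (2:ℝ) ≤ C ^ (2:ℝ) * ‖v p.2‖ ^ (2:ℝ) := by
    intro v p
    rw [norm_mul, Real.mul_rpow (norm_nonneg _) (norm_nonneg _)]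
    exact mul_le_mul_of_nonneg_right
      (Real.rpow_le_rpow (norm_nonneg _) (hgC _ _) (by norm_num))
      (Real.rpow_nonneg (norm_nonneg _) _)
  have hwsum : ∀ v, Summable fun p => ‖w v p‖ ^ (2:ℝ) := by
    intro v
    exact Summable.of_nonneg_of_le (fun p => Real.rpow_nonneg (norm_nonneg _) _)
      (hwle v) (hmaj v)
  have hwtsum : ∀ v : lp (fun _ : ↥𝕏 => ℂ) 2,
      ∑' p, ‖w v p‖ ^ (2:ℝ) ≤ (N:ℝ) ^ n * (C ^ (2:ℝ) * ‖v‖ ^ (2:ℝ)) := by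
    intro v
    refine le_trans (Summable.tsum_le_tsum (hwle v) (hwsum v) (hmaj v)) ?_
    rw [Summable.tsum_prod' (hmaj v) fun k => ((hv2 v).mul_left _)]
    refine le_of_eq ?_
    have hinner : ∀ k : Fin n → Fin N,
        (∑' x : ↥𝕏, C ^ (2:ℝ) * ‖v x‖ ^ (2:ℝ)) = C ^ (2:ℝ) * ‖v‖ ^ (2:ℝ) := by
      intro k
      rw [tsum_mul_left]
      congr 1
      have := lp.norm_rpow_eq_tsum h2 v
      rw [htr] at this
      exact this.symm
    calc (∑' (k : Fin n → Fin N), ∑' (x : ↥𝕏), C ^ (2:ℝ) * ‖v (k, x).2‖ ^ (2:ℝ))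
        = ∑ k : Fin n → Fin N, C ^ (2:ℝ) * ‖v‖ ^ (2:ℝ) := by
          rw [tsum_fintype]
          exact Finset.sum_congr rfl fun k _ => hinner k
      _ = (N:ℝ) ^ n * (C ^ (2:ℝ) * ‖v‖ ^ (2:ℝ)) := by
          rw [Finset.sum_const, Finset.card_univ]
          simp [Fintype.card_fun, mul_comm]
  -- pointwise form of the extension
  have hext : ∀ (u : (Fin n → Fin N) × ↥𝕏 → ℂ) (y : ↥𝕏),
      ‖Function.extend Φ u 0 y‖ ^ (2:ℝ) =
        Function.extend Φ (fun p => ‖u p‖ ^ (2:ℝ)) 0 y := by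
    intro u y
    simp only [Function.extend_def]
    split
    · rfl
    · simp [Real.zero_rpow (by norm_num : (2:ℝ) ≠ 0)]
  have hmem : ∀ v : lp (fun _ : ↥𝕏 => ℂ) 2,
      Memℓp (Function.extend Φ (w v) 0) 2 := by
    intro v
    apply memℓp_gen
    have : Summable (Function.extend Φ (fun p => ‖w v p‖ ^ (2:ℝ)) 0) :=
      ⟨_, (hasSum_extend_zero hΦ).mpr (hwsum v).hasSum⟩
    refine this.congr fun y => ?_
    rw [htr, ← hext]
  have hTtsum : ∀ v : lp (fun _ : ↥𝕏 => ℂ) 2,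
      (∑' y : ↥𝕏, ‖Function.extend Φ (w v) 0 y‖ ^ (2:ℝ)) = ∑' p, ‖w v p‖ ^ (2:ℝ) := by
    intro v
    calc (∑' y : ↥𝕏, ‖Function.extend Φ (w v) 0 y‖ ^ (2:ℝ))
        = ∑' y : ↥𝕏, Function.extend Φ (fun p => ‖w v p‖ ^ (2:ℝ)) 0 y :=
          tsum_congr fun y => hext _ y
      _ = ∑' p, ‖w v p‖ ^ (2:ℝ) :=
          ((hasSum_extend_zero hΦ).mpr (hwsum v).hasSum).tsum_eq
  -- the linear map
  let T₀ : lp (fun _ : ↥𝕏 => ℂ) 2 →ₗ[ℂ] lp (fun _ : ↥𝕏 => ℂ) 2 :=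
    { toFun := fun v => ⟨Function.extend Φ (w v) 0, hmem v⟩
      map_add' := by
        intro v v'
        apply lp.ext
        have : ∀ y, Function.extend Φ (w (v + v')) 0 y =
            Function.extend Φ (w v) 0 y + Function.extend Φ (w v') 0 y := by
          intro y
          simp only [Function.extend_def]
          split
          · simp only [w, lp.coeFn_add, Pi.add_apply, mul_add]
          · simp
        funext y
        exact this y
      map_smul' := by
        intro c v
        apply lp.ext
        have : ∀ y, Function.extend Φ (w (c • v)) 0 y =
            c * Function.extend Φ (w v) 0 y := by
          intro y
          simp only [Function.extend_def]
          split
          · simp only [w, lp.coeFn_smul, Pi.smul_apply, smul_eq_mul]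
            ring
          · simp
        funext y
        simpa [lp.coeFn_smul, Pi.smul_apply] using this y }
  have hM0 : 0 ≤ (N:ℝ) ^ ((n:ℝ)/2) * C := by positivity
  have hbound : ∀ v, ‖T₀ v‖ ≤ ((N:ℝ) ^ ((n:ℝ)/2) * C) * ‖v‖ := by
    intro v
    refine lp.norm_le_of_tsum_le h2 (by positivity) ?_
    have h1 : (∑' y : ↥𝕏, ‖(T₀ v : ∀ _ : ↥𝕏, ℂ) y‖ ^ (2 : ℝ≥0∞).toReal)
        = ∑' p, ‖w v p‖ ^ (2:ℝ) := by
      rw [htr]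
      exact hTtsum v
    rw [h1]
    refine le_trans (hwtsum v) (le_of_eq ?_)
    rw [htr]
    have hNn : ((N:ℝ) ^ ((n:ℝ)/2)) ^ (2:ℝ) = (N:ℝ) ^ n := by
      rw [← Real.rpow_mul (Nat.cast_nonneg N),
        div_mul_cancel₀ _ (by norm_num : (2:ℝ) ≠ 0), Real.rpow_natCast]
    rw [Real.mul_rpow (by positivity) (norm_nonneg _),
        Real.mul_rpow (by positivity) hC0, hNn]
    ring
  let T : lp (fun _ : ↥𝕏 => ℂ) 2 →L[ℂ] lp (fun _ : ↥𝕏 => ℂ) 2 :=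
    LinearMap.mkContinuous T₀ _ hbound
  -- the formula on basis vectors
  have hT : ∀ x : ↥𝕏, T (lp.single 2 x 1) =
      ∑ k : Fin n → Fin N, g k x • lp.single 2 (σ k x) 1 := by
    intro x
    apply lp.ext
    funext y
    have hco : (↑(∑ k : Fin n → Fin N, g k x • lp.single 2 (σ k x) 1) : ∀ _ : ↥𝕏, ℂ) y =
        ∑ k : Fin n → Fin N, g k x * (lp.single 2 (σ k x) (1:ℂ) : ∀ _ : ↥𝕏, ℂ) y := by
      rw [lp.coeFn_sum]
      simp [Finset.sum_apply]
    have hlhs : (↑(T (lp.single 2 x 1)) : ∀ _ : ↥𝕏, ℂ) y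
        = Function.extend Φ (w (lp.single 2 x 1)) 0 y := rfl
    rw [hlhs, hco]
    by_cases hy : ∃ p : (Fin n → Fin N) × ↥𝕏, Φ p = y
    · obtain ⟨⟨k0, x0⟩, rfl⟩ := hy
      rw [hΦ.extend_apply]
      by_cases hx0 : x0 = x
      · subst hx0
        rw [Finset.sum_eq_single k0]
        · simp only [w, lp.single_apply_self, show Φ (k0, x0) = σ k0 x0 from rfl]
        · intro k' _ hk'
          rw [lp.single_apply_ne]
          · ring
          · intro hcon
            have hcon' : Φ (k', x0) = Φ (k0, x0) := hcon.symm
            exact hk' (congrArg Prod.fst (hΦ hcon'))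
        · intro h; exact absurd (Finset.mem_univ _) h
      · have : (lp.single 2 x (1:ℂ) : ∀ _ : ↥𝕏, ℂ) x0 = 0 :=
          lp.single_apply_ne _ _ _ hx0
        simp only [w, this, mul_zero]
        refine (Finset.sum_eq_zero fun k' _ => ?_).symm
        rw [lp.single_apply_ne]
        · ring
        · intro hcon
          have hcon' : Φ (k0, x0) = Φ (k', x) := hcon
          exact hx0 (congrArg Prod.snd (hΦ hcon'))
    · rw [Function.extend_apply' _ _ _ hy]
      simp only [Pi.zero_apply]
      refine (Finset.sum_eq_zero fun k' _ => ?_).symm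
      rw [lp.single_apply_ne]
      · ring
      · intro hcon
        exact hy ⟨(k', x), hcon.symm⟩
  -- coordinate values
  have hTcoord : ∀ (k : Fin n → Fin N) (x : ↥𝕏),
      (↑(T (lp.single 2 x 1)) : ∀ _ : ↥𝕏, ℂ) (σ k x) = g k x := by
    intro k x
    rw [hT x, lp.coeFn_sum]
    simp only [Finset.sum_apply, lp.coeFn_smul, Pi.smul_apply, smul_eq_mul]
    rw [Finset.sum_eq_single k]
    · rw [lp.single_apply_self, mul_one]
    · intro k' _ hk'
      rw [lp.single_apply_ne]
      · ring
      · intro hcon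
        have hcon' : Φ (k, x) = Φ (k', x) := hcon
        exact hk' (congrArg Prod.fst (hΦ hcon')).symm
    · intro h; exact absurd (Finset.mem_univ _) h
  -- lower bound pieces
  have hcoord : ∀ (k : Fin n → Fin N) (x : ↥𝕏), ‖g k x‖ ≤ ‖T‖ := by
    intro k x
    have h1 : ‖g k x‖ ≤ ‖T (lp.single 2 x 1)‖ := by
      rw [← hTcoord k x]
      exact lp.norm_apply_le_norm (by norm_num) _ _
    refine h1.trans ?_
    have h2' := T.le_opNorm (lp.single (E := fun _ : ↥𝕏 => ℂ) 2 x 1)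
    have h3 : ‖lp.single (E := fun _ : ↥𝕏 => ℂ) 2 x 1‖ = 1 := by
      have := lp.norm_single (E := fun _ : ↥𝕏 => ℂ) (p := 2) (by norm_num) x (1:ℂ)
      simpa using this
    rw [h3, mul_one] at h2'
    exact h2'
  have hchain : ∀ z : Z, ‖f z‖ ≤ ‖T‖ := by
    intro z
    obtain ⟨k, hk⟩ := isGammaChain_eq_chainAux z.2
    set z0 := z.1 ⟨0, Nat.succ_pos n⟩ with hz0
    have hq : Continuous fun x : X =>
        (⟨fun i => chainAux γ k x i.1, chainAux_isGammaChain γ k x⟩ : Z) := by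
      refine Continuous.subtype_mk ?_ _
      exact continuous_pi fun i => chainAux_continuous (fun k => (hemb k).continuous) k i.1
    have hS : IsClosed {x : X | ‖
        (f ⟨fun i => chainAux γ k x i.1, chainAux_isGammaChain γ k x⟩)‖ ≤ ‖T‖} :=
      isClosed_le (continuous_norm.comp (f.continuous.comp hq)) continuous_const
    have h𝕏S : 𝕏 ⊆ {x : X | ‖
        (f ⟨fun i => chainAux γ k x i.1, chainAux_isGammaChain γ k x⟩)‖ ≤ ‖T‖} := by
      intro x hx
      exact hcoord k ⟨x, hx⟩
    have hz0S : z0 ∈ {x : X | ‖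
        (f ⟨fun i => chainAux γ k x i.1, chainAux_isGammaChain γ k x⟩)‖ ≤ ‖T‖} :=
      hS.closure_subset_iff.mpr h𝕏S (hdense z0)
    have hzeq : z = ⟨fun i => chainAux γ k z0 i.1, chainAux_isGammaChain γ k z0⟩ :=
      Subtype.ext (funext fun i => hk i)
    rw [hzeq]
    exact hz0S
  refine ⟨T, ?_, Real.iSup_le hchain (norm_nonneg T),
    LinearMap.mkContinuous_norm_le T₀ hM0 hbound⟩
  rw [Subsingleton.elim (Classical.decEq ↥𝕏) (inferInstance : DecidableEq ↥𝕏)]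
  exact hT
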